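/- The number of pairs (P₁,P₂) of non-intersecting upright lattice paths with P₁ from (0,0) to (n,n), P₂ from (1,−1) to (n+1,n−1), both staying weakly below the diagonal (avoiding all points (x,y) with y > x), equals C_{n+2}·C_n − C_{n+1}², where C_m is the m-th Catalan number. -/

import Mathlib

/-- An upright lattice path with `m` unit steps `(1,0)` or `(0,1)` in `ℤ × ℤ`,
from `s` to `t`, recorded as the sequence of its `m+1` visited points. -/
def IsPathZ (m : ℕ) (s t : ℤ × ℤ) (p : Fin (m + 1) → ℤ × ℤ) : Prop :=
  p 0 = s ∧ p (Fin.last m) = t ∧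
    ∀ i : Fin m, p i.succ = p i.castSucc + (1, 0) ∨ p i.succ = p i.castSucc + (0, 1)

/-- The path stays weakly below the diagonal: every visited `(x,y)` has `y ≤ x`. -/
def BelowDiag {m : ℕ} (p : Fin (m + 1) → ℤ × ℤ) : Prop := ∀ i, (p i).2 ≤ (p i).1

/-- Two paths are non-intersecting if they share no point. -/
def NoninterZ {m : ℕ} (p q : Fin (m + 1) → ℤ × ℤ) : Prop := ∀ i j, p i ≠ q j


open Finset

namespace NDP

/-- number of `true`s among the first `k` entries of `s`. -/
def cnt {m : ℕ} (s : Fin m → Bool) : ℕ → ℕ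
  | 0 => 0
  | k+1 => cnt s k + (if h : k < m then (if s ⟨k, h⟩ then 1 else 0) else 0)

variable {m : ℕ} (s t : Fin m → Bool)

lemma cnt_zero : cnt s 0 = 0 := rfl

lemma cnt_succ' (k : ℕ) :
    cnt s (k+1) = cnt s k + (if h : k < m then (if s ⟨k, h⟩ then 1 else 0) else 0) := rfl

lemma cnt_succ (k : ℕ) (h : k < m) :
    cnt s (k+1) = cnt s k + (if s ⟨k, h⟩ then 1 else 0) := by
  simp [cnt_succ', h]

lemma cnt_le_succ (k : ℕ) : cnt s k ≤ cnt s (k+1) := by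
  rw [cnt_succ']; omega

lemma cnt_succ_le (k : ℕ) : cnt s (k+1) ≤ cnt s k + 1 := by
  rw [cnt_succ']
  split
  · split <;> omega
  · omega

lemma cnt_le (k : ℕ) : cnt s k ≤ k := by
  induction k with
  | zero => simp [cnt]
  | succ k ih => have := cnt_succ_le s k; omega

/-- agreement on a prefix gives equal counts -/
lemma cnt_congr_prefix {j : ℕ} {s t : Fin m → Bool}
    (hag : ∀ i : Fin m, (i : ℕ) < j → s i = t i) :
    ∀ k ≤ j, cnt s k = cnt t k := by
  intro k hk
  induction k with
  | zero => rfl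
  | succ k ih =>
    rw [cnt_succ', cnt_succ', ih (by omega)]
    congr 1
    split
    · next h => rw [hag ⟨k, h⟩ (by simpa using (by omega : k < j))]
    · rfl

/-- agreement on a suffix gives equal count increments -/
lemma cnt_congr_suffix {j : ℕ} {s t : Fin m → Bool}
    (hag : ∀ i : Fin m, j ≤ (i : ℕ) → s i = t i) :
    ∀ k, j ≤ k → cnt s k + cnt t j = cnt t k + cnt s j := by
  intro k hk
  induction k with
  | zero =>
    have : j = 0 := by omega
    subst this; omega
  | succ k ih =>
    rcases Nat.lt_or_ge j (k+1) with h | h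
    · have ihk := ih (by omega)
      rw [cnt_succ', cnt_succ']
      split
      · next hkm => rw [hag ⟨k, hkm⟩ (by simpa using (by omega : j ≤ k))]; omega
      · omega
    · have : j = k + 1 := by omega
      subst this; omega

lemma cnt_not (k : ℕ) (hk : k ≤ m) : cnt (fun i => ! s i) k + cnt s k = k := by
  induction k with
  | zero => rfl
  | succ k ih =>
    rw [cnt_succ _ k (by omega), cnt_succ s k (by omega)]
    have := ih (by omega)
    rcases h : s ⟨k, by omega⟩ <;> simp [h] <;> omega

/-- first-passage lemma: a walk which never drops by more than 1 per step and
crosses level `c` downwards must hit `c` exactly, at a first time. -/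
lemma exists_first_hit (u : ℕ → ℤ) (hstep : ∀ k, u k - 1 ≤ u (k+1)) (c : ℤ) (K : ℕ)
    (h0 : c < u 0) (hK : u K ≤ c) :
    ∃ k, k ≤ K ∧ u k = c ∧ ∀ j < k, c < u j := by
  classical
  have hex : ∃ k, u k ≤ c := ⟨K, hK⟩
  have hk₀ : u (Nat.find hex) ≤ c := Nat.find_spec hex
  have hlt : ∀ j < Nat.find hex, c < u j := fun j hj => lt_of_not_ge (Nat.find_min hex hj)
  have hk0K : Nat.find hex ≤ K := Nat.find_min' hex hK
  have hne : Nat.find hex ≠ 0 := by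
    intro h; rw [h] at hk₀; omega
  have hstep' := hstep (Nat.find hex - 1)
  rw [(by omega : Nat.find hex - 1 + 1 = Nat.find hex)] at hstep'
  have := hlt (Nat.find hex - 1) (by omega)
  exact ⟨Nat.find hex, hk0K, by omega, hlt⟩


/-! ### Heights and sets of constrained sequences -/

def val (a : ℤ) (s : Fin m → Bool) (k : ℕ) : ℤ := a + 2 * (cnt s k) - k

lemma val_zero (a : ℤ) : val a s 0 = a := by simp [val, cnt_zero]

lemma val_step_ge (a : ℤ) (k : ℕ) : val a s k - 1 ≤ val a s (k + 1) := by
  have := cnt_le_succ s k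
  simp only [val]
  push_cast
  omega

lemma val_step_le (a : ℤ) (k : ℕ) : val a s (k + 1) ≤ val a s k + 1 := by
  have := cnt_succ_le s k
  simp only [val]
  push_cast
  omega

noncomputable def hitT (a : ℤ) (s : Fin m → Bool) : ℕ :=
  sInf {k | val a s k = -1}

noncomputable def flipP (a : ℤ) (s : Fin m → Bool) : Fin m → Bool :=
  fun i => if (i : ℕ) < hitT a s then !(s i) else s i

lemma hitT_spec (a : ℤ) (s : Fin m → Bool) (h : ∃ k, val a s k = -1) :
    val a s (hitT a s) = -1 ∧ ∀ j < hitT a s, val a s j ≠ -1 := by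
  constructor
  · exact Nat.sInf_mem (s := {k | val a s k = -1}) h
  · intro j hj
    exact Nat.notMem_of_lt_sInf hj

lemma hitT_le (a : ℤ) (s : Fin m → Bool) {K : ℕ} (hK : val a s K = -1) :
    hitT a s ≤ K := Nat.sInf_le hK

/-- if `a ≥ 0`, the walk is nonnegative strictly before its first `-1` hit. -/
lemma before_hit_nonneg {a : ℤ} (ha : 0 ≤ a) (s : Fin m → Bool) (h : ∃ k, val a s k = -1) :
    ∀ j < hitT a s, 0 ≤ val a s j := by
  intro j hj
  induction j with
  | zero => rw [val_zero]; exact ha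
  | succ j ih =>
    have h1 := ih (by omega)
    have h2 := (hitT_spec a s h).2 (j+1) hj
    have h3 := val_step_ge s a j
    omega

lemma before_hit_le_neg2 {a : ℤ} (ha : a ≤ -2) (s : Fin m → Bool) (h : ∃ k, val a s k = -1) :
    ∀ j < hitT a s, val a s j ≤ -2 := by
  intro j hj
  induction j with
  | zero => rw [val_zero]; exact ha
  | succ j ih =>
    have h1 := ih (by omega)
    have h2 := (hitT_spec a s h).2 (j+1) hj
    have h3 := val_step_le s a j
    omega

lemma val_flipP_le (a : ℤ) (s : Fin m → Bool) (hm : hitT a s ≤ m) :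
    ∀ k ≤ hitT a s, val (-a-2) (flipP a s) k = -2 - val a s k := by
  intro k hk
  have h1 : cnt (flipP a s) k = cnt (fun i => !(s i)) k := by
    refine cnt_congr_prefix (fun i hi => ?_) k hk
    simp [flipP, hi]
  have h2 := cnt_not s k (le_trans hk hm)
  simp only [val, h1]
  push_cast
  omega

lemma val_flipP_ge (a : ℤ) (s : Fin m → Bool) (h : ∃ k, val a s k = -1) (hm : hitT a s ≤ m) :
    ∀ k, hitT a s ≤ k → val (-a-2) (flipP a s) k = val a s k := by
  intro k hk
  have h1 : cnt (flipP a s) k + cnt s (hitT a s) = cnt s k + cnt (flipP a s) (hitT a s) := by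
    refine cnt_congr_suffix (fun i hi => ?_) k hk
    simp [flipP, Nat.not_lt.mpr hi]
  have h2 := val_flipP_le a s hm (hitT a s) le_rfl
  have h3 := (hitT_spec a s h).1
  simp only [val] at h2 h3 ⊢
  push_cast at h2 h3 ⊢
  omega

lemma hitT_flipP (a : ℤ) (s : Fin m → Bool) (h : ∃ k, val a s k = -1) (hm : hitT a s ≤ m) :
    hitT (-a-2) (flipP a s) = hitT a s := by
  have hhit : val (-a-2) (flipP a s) (hitT a s) = -1 := by
    rw [val_flipP_ge a s h hm _ le_rfl, (hitT_spec a s h).1]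
  have hub := hitT_le _ _ hhit
  rcases Nat.lt_or_ge (hitT (-a-2) (flipP a s)) (hitT a s) with hlt | hge
  · exfalso
    have h2 := (hitT_spec (-a-2) (flipP a s) ⟨_, hhit⟩).1
    rw [val_flipP_le a s hm _ (le_of_lt hlt)] at h2
    exact (hitT_spec a s h).2 _ hlt (by omega)
  · omega

lemma flipP_flipP (a : ℤ) (s : Fin m → Bool) (h : ∃ k, val a s k = -1) (hm : hitT a s ≤ m) :
    flipP (-a-2) (flipP a s) = s := by
  funext i
  simp only [flipP, hitT_flipP a s h hm]
  split <;> simp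


/-! ### The sets of constrained walks and their cardinalities -/

attribute [local instance] Classical.propDecidable

noncomputable def All (m : ℕ) (a b : ℤ) : Finset (Fin m → Bool) :=
  univ.filter (fun s => val a s m = b)

noncomputable def Ok (m : ℕ) (a b : ℤ) : Finset (Fin m → Bool) :=
  univ.filter (fun s => (∀ k ≤ m, 0 ≤ val a s k) ∧ val a s m = b)

lemma mem_All {a b : ℤ} {s : Fin m → Bool} : s ∈ All m a b ↔ val a s m = b := by
  simp [All]

lemma mem_Ok {a b : ℤ} {s : Fin m → Bool} :
    s ∈ Ok m a b ↔ (∀ k ≤ m, 0 ≤ val a s k) ∧ val a s m = b := by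
  simp [Ok]

lemma cnt_eq_card (k : ℕ) (hk : k ≤ m) :
    cnt s k = (univ.filter fun i : Fin m => (i : ℕ) < k ∧ s i = true).card := by
  induction k with
  | zero => simpa using cnt_zero s
  | succ k ih =>
    have hk' : k < m := hk
    rw [cnt_succ s k hk', ih (by omega)]
    have hsplit : (univ.filter fun i : Fin m => (i : ℕ) < k + 1 ∧ s i = true)
        = (univ.filter fun i : Fin m => (i : ℕ) < k ∧ s i = true)
          ∪ (univ.filter fun i : Fin m => (i : ℕ) = k ∧ s i = true) := by
      ext i
      simp only [mem_filter, mem_univ, true_and, mem_union]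
      rcases h : s i <;> simp <;> omega
    rw [hsplit, card_union_of_disjoint]
    · congr 1
      rcases h : s ⟨k, hk'⟩
      · have he : (univ.filter fun i : Fin m => (i : ℕ) = k ∧ s i = true) = ∅ := by
          rw [Finset.filter_eq_empty_iff]
          intro i _
          rintro ⟨h1, h2⟩
          have hik : i = ⟨k, hk'⟩ := Fin.ext h1
          rw [hik, h] at h2
          exact Bool.false_ne_true h2
        rw [he]; simp
      · have he : (univ.filter fun i : Fin m => (i : ℕ) = k ∧ s i = true) = {⟨k, hk'⟩} := by
          ext i
          simp only [mem_filter, mem_univ, true_and, Finset.mem_singleton]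
          constructor
          · rintro ⟨h1, _⟩; exact Fin.ext h1
          · rintro rfl; exact ⟨rfl, h⟩
        rw [he]; simp
    · rw [Finset.disjoint_left]
      intro i hi1 hi2
      simp only [mem_filter] at hi1 hi2
      omega

lemma cnt_total : cnt s m = (univ.filter fun i : Fin m => s i = true).card := by
  rw [cnt_eq_card s m le_rfl]
  congr 1
  ext i
  simp [i.isLt]

lemma card_cnt (c : ℕ) :
    (univ.filter fun s : Fin m → Bool => cnt s m = c).card = m.choose c := by
  have : m.choose c = (Finset.powersetCard c (univ : Finset (Fin m))).card := by
    rw [Finset.card_powersetCard, card_univ, Fintype.card_fin]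
  rw [this]
  apply Finset.card_bij (i := fun s _ => univ.filter (fun i => s i = true))
  · intro s hs
    simp only [mem_filter, mem_univ, true_and] at hs
    rw [Finset.mem_powersetCard_univ, ← cnt_total, hs]
  · intro s₁ h₁ s₂ h₂ heq
    funext i
    have := Finset.ext_iff.mp heq i
    simp only [mem_filter, mem_univ, true_and] at this
    rcases h : s₁ i <;> rcases h' : s₂ i <;> simp [h, h'] at this ⊢
  · intro A hA
    rw [Finset.mem_powersetCard_univ] at hA
    refine ⟨fun i => decide (i ∈ A), ?_, ?_⟩
    · simp only [mem_filter, mem_univ, true_and, cnt_total]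
      rw [show (univ.filter fun i : Fin m => decide (i ∈ A) = true) = A from by ext i; simp]
      exact hA
    · ext i; simp

lemma card_All (a b : ℤ) (c : ℕ) (hc : b - a + m = 2 * c) :
    (All m a b).card = m.choose c := by
  rw [← card_cnt c]
  congr 1
  ext s
  have := cnt_le s m
  simp only [All, mem_filter, mem_univ, true_and]
  simp only [val]
  omega

/-! ### Reflection principle -/

lemma reflect (a b : ℤ) (ha : 0 ≤ a) (hb : 0 ≤ b) :
    (All m a b).card = (Ok m a b).card + (All m (-a-2) b).card := by
  classical
  have hOk : Ok m a b = (All m a b).filter (fun s => ∀ k ≤ m, 0 ≤ val a s k) := by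
    ext s; simp only [Ok, All, mem_filter, mem_univ, true_and]; tauto
  rw [hOk]
  rw [← Finset.card_filter_add_card_filter_not
      (s := All m a b) (p := fun s => ∀ k ≤ m, 0 ≤ val a s k)]
  congr 1
  -- facts about s in the "bad" set
  have key : ∀ s : Fin m → Bool, s ∈ (All m a b).filter (fun s => ¬ ∀ k ≤ m, 0 ≤ val a s k) →
      (∃ k, val a s k = -1) ∧ hitT a s ≤ m := by
    intro s hs
    simp only [mem_filter, mem_All, not_forall, not_le] at hs
    obtain ⟨hend, K, hKm, hKneg⟩ := hs
    obtain ⟨k', hk'K, hk'val, -⟩ := exists_first_hit (val a s) (val_step_ge s a) (-1) K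
      (by rw [val_zero]; omega) (by omega)
    exact ⟨⟨k', hk'val⟩, le_trans (hitT_le a s hk'val) (le_trans hk'K hKm)⟩
  have key' : ∀ t : Fin m → Bool, t ∈ All m (-a-2) b →
      (∃ k, val (-a-2) t k = -1) ∧ hitT (-a-2) t ≤ m := by
    intro t ht
    rw [mem_All] at ht
    obtain ⟨k', hk'K, hk'val, -⟩ := exists_first_hit (fun k => -(val (-a-2) t k))
      (fun k => by show -(val (-a-2) t k) - 1 ≤ -(val (-a-2) t (k+1))
                   have := val_step_le t (-a-2) k; omega) 1 m
      (by show (1:ℤ) < -(val (-a-2) t 0); rw [val_zero]; omega)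
      (by show -(val (-a-2) t m) ≤ 1; rw [ht]; omega)
    have hv : val (-a-2) t k' = -1 := by
      have : -(val (-a-2) t k') = 1 := hk'val
      omega
    exact ⟨⟨k', hv⟩, le_trans (hitT_le _ t hv) hk'K⟩
  have ea : -(-a-2) - 2 = a := by ring
  apply Finset.card_bij' (i := fun s _ => flipP a s) (j := fun t _ => flipP (-a-2) t)
  · -- maps into All m (-a-2) b
    intro s hs
    obtain ⟨hex, hm'⟩ := key s hs
    simp only [mem_filter, mem_All] at hs ⊢
    rw [val_flipP_ge a s hex hm' m hm']
    exact hs.1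
  · -- maps back into bad set
    intro t ht
    obtain ⟨hex, hm'⟩ := key' t ht
    rw [mem_All] at ht
    have hge := val_flipP_ge (-a-2) t hex hm'
    rw [ea] at hge
    simp only [mem_filter, mem_All, not_forall, not_le]
    refine ⟨?_, hitT (-a-2) t, hm', ?_⟩
    · rw [hge m hm', ht]
    · rw [hge _ le_rfl, (hitT_spec _ t hex).1]; omega
  · intro s hs
    obtain ⟨hex, hm'⟩ := key s hs
    exact flipP_flipP a s hex hm'
  · intro t ht
    obtain ⟨hex, hm'⟩ := key' t ht
    have := flipP_flipP (-a-2) t hex hm'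
    rwa [ea] at this

/-! ### Tail-swapping (Gessel–Viennot) -/

noncomputable def crossT (f g : Fin m → Bool) : ℕ := sInf {k | cnt f k = cnt g k + 1}

def swapP (k₀ : ℕ) (f g : Fin m → Bool) : Fin m → Bool :=
  fun i => if (i : ℕ) < k₀ then f i else g i

noncomputable def Psi (fg : (Fin m → Bool) × (Fin m → Bool)) :
    (Fin m → Bool) × (Fin m → Bool) :=
  (swapP (crossT fg.1 fg.2) fg.1 fg.2, swapP (crossT fg.1 fg.2) fg.2 fg.1)

variable (f g : Fin m → Bool)

lemma crossT_spec (h : ∃ k, cnt f k = cnt g k + 1) :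
    cnt f (crossT f g) = cnt g (crossT f g) + 1 ∧
      ∀ j < crossT f g, cnt f j ≠ cnt g j + 1 :=
  ⟨Nat.sInf_mem (s := {k | cnt f k = cnt g k + 1}) h, fun j hj => by
    have h2 : j ∉ {k | cnt f k = cnt g k + 1} := Nat.notMem_of_lt_sInf hj
    simpa using h2⟩

lemma crossT_le {K : ℕ} (hK : cnt f K = cnt g K + 1) : crossT f g ≤ K :=
  Nat.sInf_le hK

/-- existence of an exact crossing from a weak crossing -/
lemma cross_exists (K : ℕ) (hK : cnt g K + 1 ≤ cnt f K) :
    ∃ k ≤ K, cnt f k = cnt g k + 1 := by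
  obtain ⟨k, hk, hv, -⟩ := exists_first_hit (fun k => 1 + (cnt g k : ℤ) - cnt f k)
    (fun k => by
      show 1 + (cnt g k : ℤ) - cnt f k - 1 ≤ 1 + (cnt g (k+1) : ℤ) - cnt f (k+1)
      have h1 := cnt_le_succ g k
      have h2 := cnt_succ_le f k
      push_cast; omega) 0 K
    (by show (0:ℤ) < 1 + (cnt g 0 : ℤ) - cnt f 0; rw [cnt_zero, cnt_zero]; norm_num)
    (by show 1 + (cnt g K : ℤ) - cnt f K ≤ 0; push_cast; omega)
  refine ⟨k, hk, ?_⟩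
  have : 1 + (cnt g k : ℤ) - cnt f k = 0 := hv
  omega

lemma cnt_swap_le (k₀ : ℕ) : ∀ k ≤ k₀, cnt (swapP k₀ f g) k = cnt f k := by
  intro k hk
  exact cnt_congr_prefix (fun i hi => by simp [swapP, hi]) k hk

lemma cnt_swap_ge (k₀ : ℕ) (hcross : cnt f k₀ = cnt g k₀ + 1) :
    ∀ k, k₀ ≤ k → cnt (swapP k₀ f g) k = cnt g k + 1 := by
  intro k hk
  have h1 : cnt (swapP k₀ f g) k + cnt g k₀ = cnt g k + cnt (swapP k₀ f g) k₀ :=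
    cnt_congr_suffix (fun i hi => by simp [swapP, Nat.not_lt.mpr hi]) k hk
  have h2 := cnt_swap_le f g k₀ k₀ le_rfl
  omega

lemma crossT_Psi (h : ∃ k, cnt f k = cnt g k + 1) :
    crossT (Psi (f, g)).1 (Psi (f, g)).2 = crossT f g := by
  obtain ⟨hc, hmin⟩ := crossT_spec f g h
  set k₀ := crossT f g with hk₀
  have e1 : ∀ j ≤ k₀, cnt (Psi (f, g)).1 j = cnt f j := fun j hj => cnt_swap_le f g k₀ j hj
  have e2 : ∀ j ≤ k₀, cnt (Psi (f, g)).2 j = cnt g j := fun j hj => cnt_swap_le g f k₀ j hj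
  have hmem : cnt (Psi (f, g)).1 k₀ = cnt (Psi (f, g)).2 k₀ + 1 := by
    rw [e1 k₀ le_rfl, e2 k₀ le_rfl]; exact hc
  apply le_antisymm (crossT_le _ _ hmem)
  by_contra hlt
  push_neg at hlt
  have hmem' := (crossT_spec (Psi (f, g)).1 (Psi (f, g)).2 ⟨k₀, hmem⟩).1
  rw [e1 _ (le_of_lt hlt), e2 _ (le_of_lt hlt)] at hmem'
  exact hmin _ hlt hmem'

lemma Psi_Psi (h : ∃ k, cnt f k = cnt g k + 1) : Psi (Psi (f, g)) = (f, g) := by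
  have hct := crossT_Psi f g h
  have : Psi (Psi (f, g)) = (swapP (crossT f g) (Psi (f, g)).1 (Psi (f, g)).2,
      swapP (crossT f g) (Psi (f, g)).2 (Psi (f, g)).1) := by
    rw [Psi, hct]
  rw [this]
  have e : ∀ (u v : Fin m → Bool), swapP (crossT f g) (swapP (crossT f g) u v)
      (swapP (crossT f g) v u) = u := by
    intro u v
    funext i
    simp only [swapP]
    split <;> rfl
  simp only [Psi]
  exact Prod.ext (e f g) (e g f)

/-! ### the LGV count -/

noncomputable def NC (m : ℕ) : Finset ((Fin m → Bool) × (Fin m → Bool)) :=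
  (Ok m 0 0 ×ˢ Ok m 2 2).filter (fun p => ∀ k ≤ m, cnt p.1 k ≤ cnt p.2 k)

lemma cnt_swap_ge' (k₀ : ℕ) (hcross : cnt f k₀ = cnt g k₀ + 1) :
    ∀ k, k₀ ≤ k → cnt (swapP k₀ g f) k + 1 = cnt f k := by
  intro k hk
  have h1 : cnt (swapP k₀ g f) k + cnt f k₀ = cnt f k + cnt (swapP k₀ g f) k₀ :=
    cnt_congr_suffix (fun i hi => by simp [swapP, Nat.not_lt.mpr hi]) k hk
  have h2 := cnt_swap_le g f k₀ k₀ le_rfl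
  omega

lemma lgv : (Ok m 0 0 ×ˢ Ok m 2 2).card = (NC m).card + (Ok m 0 2 ×ˢ Ok m 2 0).card := by
  classical
  rw [← Finset.card_filter_add_card_filter_not
      (s := Ok m 0 0 ×ˢ Ok m 2 2) (p := fun p => ∀ k ≤ m, cnt p.1 k ≤ cnt p.2 k)]
  congr 1
  have key : ∀ p : (Fin m → Bool) × (Fin m → Bool),
      p ∈ (Ok m 0 0 ×ˢ Ok m 2 2).filter (fun p => ¬ ∀ k ≤ m, cnt p.1 k ≤ cnt p.2 k) →
      (∃ k, cnt p.1 k = cnt p.2 k + 1) ∧ crossT p.1 p.2 ≤ m := by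
    rintro ⟨f, g⟩ hp
    simp only [mem_filter, not_forall, not_le] at hp
    obtain ⟨-, K, hKm, hKlt⟩ := hp
    obtain ⟨k, hkK, hk⟩ := cross_exists f g K (by omega)
    exact ⟨⟨k, hk⟩, le_trans (crossT_le f g hk) (le_trans hkK hKm)⟩
  have key' : ∀ p : (Fin m → Bool) × (Fin m → Bool), p ∈ Ok m 0 2 ×ˢ Ok m 2 0 →
      (∃ k, cnt p.1 k = cnt p.2 k + 1) ∧ crossT p.1 p.2 ≤ m := by
    rintro ⟨f, g⟩ hp
    simp only [Finset.mem_product, mem_Ok] at hp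
    obtain ⟨⟨-, hf⟩, -, hg⟩ := hp
    simp only [val] at hf hg
    obtain ⟨k, hkK, hk⟩ := cross_exists f g m (by omega)
    exact ⟨⟨k, hk⟩, le_trans (crossT_le f g hk) hkK⟩
  apply Finset.card_bij' (i := fun p _ => Psi p) (j := fun p _ => Psi p)
  · rintro ⟨f, g⟩ hp
    obtain ⟨hex, hcm⟩ := key _ hp
    obtain ⟨hc, -⟩ := crossT_spec f g hex
    simp only [mem_filter, Finset.mem_product, mem_Ok] at hp
    obtain ⟨⟨⟨hf1, hf2⟩, hg1, hg2⟩, -⟩ := hp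
    simp only [Finset.mem_product, mem_Ok, Psi]
    refine ⟨⟨?_, ?_⟩, ?_, ?_⟩
    · intro k hk
      rcases le_or_gt k (crossT f g) with h | h
      · have e := cnt_swap_le f g (crossT f g) k h
        have h2 := hf1 k hk
        simp only [val] at h2 ⊢
        omega
      · have e := cnt_swap_ge f g (crossT f g) hc k (le_of_lt h)
        have h2 := hg1 k hk
        simp only [val] at h2 ⊢
        push_cast
        omega
    · have e := cnt_swap_ge f g (crossT f g) hc m hcm
      simp only [val] at hg2 ⊢
      push_cast
      omega
    · intro k hk
      rcases le_or_gt k (crossT f g) with h | h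
      · have e := cnt_swap_le g f (crossT f g) k h
        have h2 := hg1 k hk
        simp only [val] at h2 ⊢
        omega
      · have e := cnt_swap_ge' f g (crossT f g) hc k (le_of_lt h)
        have h2 := hf1 k hk
        simp only [val] at h2 ⊢
        push_cast
        omega
    · have e := cnt_swap_ge' f g (crossT f g) hc m hcm
      simp only [val] at hf2 ⊢
      push_cast
      omega
  · rintro ⟨f, g⟩ hp
    obtain ⟨hex, hcm⟩ := key' _ hp
    obtain ⟨hc, -⟩ := crossT_spec f g hex
    simp only [Finset.mem_product, mem_Ok] at hp
    obtain ⟨⟨hf1, hf2⟩, hg1, hg2⟩ := hp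
    simp only [mem_filter, Finset.mem_product, mem_Ok, Psi, not_forall, not_le]
    refine ⟨⟨⟨?_, ?_⟩, ?_, ?_⟩, crossT f g, hcm, ?_⟩
    · intro k hk
      rcases le_or_gt k (crossT f g) with h | h
      · have e := cnt_swap_le f g (crossT f g) k h
        have h2 := hf1 k hk
        simp only [val] at h2 ⊢
        omega
      · have e := cnt_swap_ge f g (crossT f g) hc k (le_of_lt h)
        have h2 := hg1 k hk
        simp only [val] at h2 ⊢
        push_cast
        omega
    · have e := cnt_swap_ge f g (crossT f g) hc m hcm
      simp only [val] at hg2 ⊢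
      push_cast
      omega
    · intro k hk
      rcases le_or_gt k (crossT f g) with h | h
      · have e := cnt_swap_le g f (crossT f g) k h
        have h2 := hg1 k hk
        simp only [val] at h2 ⊢
        omega
      · have e := cnt_swap_ge' f g (crossT f g) hc k (le_of_lt h)
        have h2 := hf1 k hk
        simp only [val] at h2 ⊢
        push_cast
        omega
    · have e := cnt_swap_ge' f g (crossT f g) hc m hcm
      simp only [val] at hf2 ⊢
      push_cast
      omega
    · have e1 := cnt_swap_le f g (crossT f g) (crossT f g) le_rfl
      have e2 := cnt_swap_le g f (crossT f g) (crossT f g) le_rfl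
      omega
  · rintro ⟨f, g⟩ hp
    exact Psi_Psi f g (key _ hp).1
  · rintro ⟨f, g⟩ hp
    exact Psi_Psi f g (key' _ hp).1

/-! ### The binomial-coefficient / Catalan identity -/

lemma catalan_four : catalan 4 = 14 := by
  norm_num [catalan_eq_centralBinom_div, Nat.centralBinom, Nat.choose]

lemma alg (n : ℕ) (hn : 1 ≤ n) :
    (((2*n).choose n : ℤ) - ((2*n).choose (n+1) : ℤ))
      * (((2*n).choose n : ℤ) - ((2*n).choose (n+3) : ℤ))
    - (((2*n).choose (n+1) : ℤ) - ((2*n).choose (n+2) : ℤ))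
      * (((2*n).choose (n-1) : ℤ) - ((2*n).choose (n+2) : ℤ))
    = (catalan (n + 2) : ℤ) * (catalan n : ℤ) - (catalan (n + 1) : ℤ) ^ 2 := by
  rcases (show n = 1 ∨ n = 2 ∨ 3 ≤ n by omega) with rfl | rfl | hn3
  · norm_num [catalan_one, catalan_two, catalan_three]
    decide
  · norm_num [catalan_two, catalan_three, catalan_four]
    decide
  · -- n ≥ 3 : work in ℚ
    have hsymm : (2*n).choose (n-1) = (2*n).choose (n+1) := by
      have h := Nat.choose_symm (show n+1 ≤ 2*n by omega)
      rwa [show 2*n - (n+1) = n-1 by omega] at h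
    rw [hsymm]
    have key : (((2*n).choose n : ℚ) - ((2*n).choose (n+1) : ℚ))
        * (((2*n).choose n : ℚ) - ((2*n).choose (n+3) : ℚ))
      - (((2*n).choose (n+1) : ℚ) - ((2*n).choose (n+2) : ℚ))
        * (((2*n).choose (n+1) : ℚ) - ((2*n).choose (n+2) : ℚ))
      = (catalan (n + 2) : ℚ) * (catalan n : ℚ) - (catalan (n + 1) : ℚ) ^ 2 := by
      have hx3 : (3:ℚ) ≤ (n:ℚ) := by exact_mod_cast hn3
      have hDpos : (0:ℚ) < ((n-3).factorial : ℚ) := by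
        exact_mod_cast Nat.factorial_pos (n-3)
      have hx0 : (n:ℚ) ≠ 0 := by linarith
      have hm1 : (n:ℚ) - 1 ≠ 0 := by intro h; linarith [h]
      have hm2 : (n:ℚ) - 2 ≠ 0 := by intro h; linarith [h]
      have hp1 : (n:ℚ) + 1 ≠ 0 := by linarith
      have hp2 : (n:ℚ) + 2 ≠ 0 := by linarith
      have hp3 : (n:ℚ) + 3 ≠ 0 := by linarith
      have hD : ((n-3).factorial : ℚ) ≠ 0 := ne_of_gt hDpos
      -- factorial expansion facts
      have e1 : ((n+1).factorial : ℚ) = ((n:ℚ)+1) * (n.factorial : ℚ) := by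
        rw [Nat.factorial_succ]; push_cast; ring
      have e2 : ((n+2).factorial : ℚ) = ((n:ℚ)+2) * ((n+1).factorial : ℚ) := by
        rw [show n+2 = (n+1)+1 by ring, Nat.factorial_succ]; push_cast; ring
      have e3 : ((n+3).factorial : ℚ) = ((n:ℚ)+3) * ((n+2).factorial : ℚ) := by
        rw [show n+3 = (n+2)+1 by ring, Nat.factorial_succ]; push_cast; ring
      have f1 : (n.factorial : ℚ) = (n:ℚ) * ((n-1).factorial : ℚ) := by
        exact_mod_cast (Nat.mul_factorial_pred (show n ≠ 0 by omega)).symm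
      have d1 : ((n-1).factorial : ℚ) = ((n:ℚ)-1) * ((n-2).factorial : ℚ) := by
        have t := Nat.mul_factorial_pred (show n - 1 ≠ 0 by omega)
        rw [show n-1-1 = n-2 by omega] at t
        have tq : ((n-1 : ℕ) : ℚ) * ((n-2).factorial : ℚ) = ((n-1).factorial : ℚ) := by
          exact_mod_cast t
        rw [← tq, Nat.cast_sub (by omega : 1 ≤ n)]
        push_cast; ring
      have d2 : ((n-2).factorial : ℚ) = ((n:ℚ)-2) * ((n-3).factorial : ℚ) := by
        have t := Nat.mul_factorial_pred (show n - 2 ≠ 0 by omega)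
        rw [show n-2-1 = n-3 by omega] at t
        have tq : ((n-2 : ℕ) : ℚ) * ((n-3).factorial : ℚ) = ((n-2).factorial : ℚ) := by
          exact_mod_cast t
        rw [← tq, Nat.cast_sub (by omega : 2 ≤ n)]
        push_cast; ring
      have g1 : ((2*(n+1)).factorial : ℚ) = (2*(n:ℚ)+2)*(2*(n:ℚ)+1) * ((2*n).factorial : ℚ) := by
        rw [show 2*(n+1) = (2*n+1)+1 by ring, Nat.factorial_succ, Nat.factorial_succ]
        push_cast; ring
      have g2 : ((2*(n+2)).factorial : ℚ)
          = (2*(n:ℚ)+4)*(2*(n:ℚ)+3) * ((2*(n+1)).factorial : ℚ) := by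
        rw [show 2*(n+2) = (2*(n+1)+1)+1 by ring, Nat.factorial_succ, Nat.factorial_succ]
        push_cast; ring
      -- choose identities
      have q0 : ((2*n).choose n : ℚ) * (n.factorial : ℚ) * (n.factorial : ℚ)
          = ((2*n).factorial : ℚ) := by
        have t := Nat.choose_mul_factorial_mul_factorial (show n ≤ 2*n by omega)
        rw [show 2*n - n = n by omega] at t
        exact_mod_cast t
      have q1 : ((2*n).choose (n+1) : ℚ) * ((n+1).factorial : ℚ) * ((n-1).factorial : ℚ)
          = ((2*n).factorial : ℚ) := by
        have t := Nat.choose_mul_factorial_mul_factorial (show n+1 ≤ 2*n by omega)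
        rw [show 2*n - (n+1) = n-1 by omega] at t
        exact_mod_cast t
      have q2 : ((2*n).choose (n+2) : ℚ) * ((n+2).factorial : ℚ) * ((n-2).factorial : ℚ)
          = ((2*n).factorial : ℚ) := by
        have t := Nat.choose_mul_factorial_mul_factorial (show n+2 ≤ 2*n by omega)
        rw [show 2*n - (n+2) = n-2 by omega] at t
        exact_mod_cast t
      have q3 : ((2*n).choose (n+3) : ℚ) * ((n+3).factorial : ℚ) * ((n-3).factorial : ℚ)
          = ((2*n).factorial : ℚ) := by
        have t := Nat.choose_mul_factorial_mul_factorial (show n+3 ≤ 2*n by omega)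
        rw [show 2*n - (n+3) = n-3 by omega] at t
        exact_mod_cast t
      -- central binomial identities
      have cb1 : ((n+1).centralBinom : ℚ) * ((n+1).factorial : ℚ) * ((n+1).factorial : ℚ)
          = ((2*(n+1)).factorial : ℚ) := by
        have t := Nat.choose_mul_factorial_mul_factorial (show n+1 ≤ 2*(n+1) by omega)
        rw [show 2*(n+1) - (n+1) = n+1 by omega] at t
        rw [show (n+1).centralBinom = (2*(n+1)).choose (n+1) from rfl]
        exact_mod_cast t
      have cb2 : ((n+2).centralBinom : ℚ) * ((n+2).factorial : ℚ) * ((n+2).factorial : ℚ)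
          = ((2*(n+2)).factorial : ℚ) := by
        have t := Nat.choose_mul_factorial_mul_factorial (show n+2 ≤ 2*(n+2) by omega)
        rw [show 2*(n+2) - (n+2) = n+2 by omega] at t
        rw [show (n+2).centralBinom = (2*(n+2)).choose (n+2) from rfl]
        exact_mod_cast t
      -- catalan identities
      have k0eq : ((n:ℚ)+1) * (catalan n : ℚ) = ((2*n).choose n : ℚ) := by
        rw [show (2*n).choose n = n.centralBinom from rfl]
        exact_mod_cast succ_mul_catalan_eq_centralBinom n
      have k1eq : ((n:ℚ)+2) * (catalan (n+1) : ℚ) = ((n+1).centralBinom : ℚ) := by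
        have t := succ_mul_catalan_eq_centralBinom (n+1)
        exact_mod_cast t
      have k2eq : ((n:ℚ)+3) * (catalan (n+2) : ℚ) = ((n+2).centralBinom : ℚ) := by
        have t := succ_mul_catalan_eq_centralBinom (n+2)
        exact_mod_cast t
      -- rewrite all factorials down to (n-3)! and (2n)!
      rw [f1, d1, d2] at q0
      rw [e1, f1, d1, d2] at q1
      rw [e2, e1, f1, d1, d2] at q2
      rw [e3, e2, e1, f1, d1, d2] at q3
      rw [e1, f1, d1, d2, g1] at cb1
      rw [e2, e1, f1, d1, d2, g2, g1] at cb2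
      -- solved (division) forms
      set x : ℚ := (n:ℚ)
      set D : ℚ := ((n-3).factorial : ℚ)
      set G : ℚ := ((2*n).factorial : ℚ)
      have hQ : x*(x-1)*(x-2)*D ≠ 0 := by
        exact mul_ne_zero (mul_ne_zero (mul_ne_zero hx0 hm1) hm2) hD
      have hc0 : ((2*n).choose n : ℚ) = G / (x*(x-1)*(x-2)*D)^2 := by
        rw [eq_div_iff (pow_ne_zero 2 hQ)]
        linear_combination q0
      have hc1 : ((2*n).choose (n+1) : ℚ) = x*G / ((x+1) * (x*(x-1)*(x-2)*D)^2) := by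
        rw [eq_div_iff (mul_ne_zero hp1 (pow_ne_zero 2 hQ))]
        linear_combination x * q1
      have hc2 : ((2*n).choose (n+2) : ℚ)
          = x*(x-1)*G / ((x+2)*(x+1) * (x*(x-1)*(x-2)*D)^2) := by
        rw [eq_div_iff (mul_ne_zero (mul_ne_zero hp2 hp1) (pow_ne_zero 2 hQ))]
        linear_combination x*(x-1) * q2
      have hc3 : ((2*n).choose (n+3) : ℚ)
          = x*(x-1)*(x-2)*G / ((x+3)*(x+2)*(x+1) * (x*(x-1)*(x-2)*D)^2) := by
        rw [eq_div_iff (mul_ne_zero (mul_ne_zero (mul_ne_zero hp3 hp2) hp1) (pow_ne_zero 2 hQ))]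
        linear_combination x*(x-1)*(x-2) * q3
      have hk0 : (catalan n : ℚ) = G / ((x+1) * (x*(x-1)*(x-2)*D)^2) := by
        rw [eq_div_iff (mul_ne_zero hp1 (pow_ne_zero 2 hQ))]
        linear_combination (x*(x-1)*(x-2)*D)^2 * k0eq + q0
      have hk1 : (catalan (n+1) : ℚ)
          = (2*x+2)*(2*x+1)*G / ((x+2) * ((x+1)*(x*(x-1)*(x-2)*D))^2) := by
        rw [eq_div_iff (mul_ne_zero hp2 (pow_ne_zero 2 (mul_ne_zero hp1 hQ)))]
        linear_combination ((x+1)*(x*(x-1)*(x-2)*D))^2 * k1eq + cb1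
      have hk2 : (catalan (n+2) : ℚ)
          = (2*x+4)*(2*x+3)*(2*x+2)*(2*x+1)*G
            / ((x+3) * ((x+2)*(x+1)*(x*(x-1)*(x-2)*D))^2) := by
        rw [eq_div_iff (mul_ne_zero hp3 (pow_ne_zero 2
          (mul_ne_zero (mul_ne_zero hp2 hp1) hQ)))]
        linear_combination ((x+2)*(x+1)*(x*(x-1)*(x-2)*D))^2 * k2eq + cb2
      rw [hc0, hc1, hc2, hc3, hk0, hk1, hk2]
      field_simp
      ring
    exact_mod_cast key

lemma nc_card (n : ℕ) (hn : 1 ≤ n) :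
    ((NC (2*n)).card : ℤ)
      = (((2*n).choose n : ℤ) - ((2*n).choose (n+1) : ℤ))
        * (((2*n).choose n : ℤ) - ((2*n).choose (n+3) : ℤ))
      - (((2*n).choose (n+1) : ℤ) - ((2*n).choose (n+2) : ℤ))
        * (((2*n).choose (n-1) : ℤ) - ((2*n).choose (n+2) : ℤ)) := by
  have R00 := reflect (m := 2*n) 0 0 le_rfl le_rfl
  have R22 := reflect (m := 2*n) 2 2 (by norm_num) (by norm_num)
  have R02 := reflect (m := 2*n) 0 2 le_rfl (by norm_num)
  have R20 := reflect (m := 2*n) 2 0 (by norm_num) le_rfl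
  have A00 := card_All (m := 2*n) 0 0 n (by push_cast; ring)
  have B00 := card_All (m := 2*n) (-0-2) 0 (n+1) (by push_cast; ring)
  have A22 := card_All (m := 2*n) 2 2 n (by push_cast; ring)
  have B22 := card_All (m := 2*n) (-2-2) 2 (n+3) (by push_cast; ring)
  have A02 := card_All (m := 2*n) 0 2 (n+1) (by push_cast; ring)
  have B02 := card_All (m := 2*n) (-0-2) 2 (n+2) (by push_cast; ring)
  have A20 := card_All (m := 2*n) 2 0 (n-1) (by rw [Nat.cast_sub hn]; push_cast; ring)
  have B20 := card_All (m := 2*n) (-2-2) 0 (n+2) (by push_cast; ring)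
  have e00 : (((Ok (2*n) 0 0).card : ℤ)) = ((2*n).choose n : ℤ) - ((2*n).choose (n+1) : ℤ) := by
    omega
  have e22 : (((Ok (2*n) 2 2).card : ℤ)) = ((2*n).choose n : ℤ) - ((2*n).choose (n+3) : ℤ) := by
    omega
  have e02 : (((Ok (2*n) 0 2).card : ℤ)) = ((2*n).choose (n+1) : ℤ) - ((2*n).choose (n+2) : ℤ) := by
    omega
  have e20 : (((Ok (2*n) 2 0).card : ℤ)) = ((2*n).choose (n-1) : ℤ) - ((2*n).choose (n+2) : ℤ) := by
    omega
  have L := lgv (m := 2*n)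
  rw [Finset.card_product, Finset.card_product] at L
  have L' : ((NC (2*n)).card : ℤ)
      = ((Ok (2*n) 0 0).card : ℤ) * ((Ok (2*n) 2 2).card : ℤ)
        - ((Ok (2*n) 0 2).card : ℤ) * ((Ok (2*n) 2 0).card : ℤ) := by
    have Lz : ((Ok (2*n) 0 0).card : ℤ) * ((Ok (2*n) 2 2).card : ℤ)
        = ((NC (2*n)).card : ℤ)
          + ((Ok (2*n) 0 2).card : ℤ) * ((Ok (2*n) 2 0).card : ℤ) := by
      exact_mod_cast L
    linarith
  rw [L', e00, e22, e02, e20]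

/-! ### from paths to step sequences -/

def pathOf (a : ℤ × ℤ) (f : Fin m → Bool) : Fin (m+1) → ℤ × ℤ :=
  fun k => (a.1 + (cnt f k.1 : ℤ), a.2 + (k.1 : ℤ) - (cnt f k.1 : ℤ))

def stepOf (p : Fin (m+1) → ℤ × ℤ) : Fin m → Bool :=
  fun i => decide (p i.succ = p i.castSucc + (1, 0))

lemma pathOf_zero (a : ℤ × ℤ) (f : Fin m → Bool) : pathOf a f 0 = a := by
  simp [pathOf, show ((0 : Fin (m+1)) : ℕ) = 0 from rfl, cnt_zero]

lemma pathOf_step (a : ℤ × ℤ) (f : Fin m → Bool) (i : Fin m) :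
    pathOf a f i.succ
      = pathOf a f i.castSucc + (if f i then ((1:ℤ), (0:ℤ)) else (0, 1)) := by
  have hc := cnt_succ f i.1 i.isLt
  rw [Fin.eta] at hc
  rcases h : f i
  · simp only [Bool.false_eq_true, if_false] at hc ⊢
    rw [Prod.ext_iff]
    refine ⟨?_, ?_⟩ <;>
      simp only [pathOf, Fin.val_succ, Fin.coe_castSucc, hc, Prod.fst_add, Prod.snd_add, h,
        if_true, Bool.false_eq_true, if_false] <;>
      push_cast <;> ring
  · simp only [if_true] at hc ⊢
    rw [Prod.ext_iff]
    refine ⟨?_, ?_⟩ <;>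
      simp only [pathOf, Fin.val_succ, Fin.coe_castSucc, hc, Prod.fst_add, Prod.snd_add, h,
        if_true, Bool.false_eq_true, if_false] <;>
      push_cast <;> ring

lemma pathOf_isPath (a : ℤ × ℤ) (f : Fin m → Bool) :
    IsPathZ m a (a.1 + (cnt f m : ℤ), a.2 + (m : ℤ) - (cnt f m : ℤ)) (pathOf a f) := by
  refine ⟨pathOf_zero a f, ?_, ?_⟩
  · simp [pathOf, Fin.last]
  · intro i
    rcases h : f i with hf | hf
    · right; rw [pathOf_step, h]; simp
    · left; rw [pathOf_step, h]; simp

lemma stepOf_pathOf (a : ℤ × ℤ) (f : Fin m → Bool) : stepOf (pathOf a f) = f := by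
  funext i
  have hs := pathOf_step a f i
  rcases h : f i
  · rw [h, if_neg Bool.false_ne_true] at hs
    simp only [stepOf, hs]
    rw [decide_eq_false]
    intro hcon
    have := add_left_cancel hcon
    simp [Prod.ext_iff] at this
  · rw [h, if_pos rfl] at hs
    simp only [stepOf, hs]
    simp

lemma path_eq {a b : ℤ × ℤ} {p : Fin (m+1) → ℤ × ℤ} (hp : IsPathZ m a b p) :
    p = pathOf a (stepOf p) := by
  funext k
  obtain ⟨k, hk⟩ := k
  induction k with
  | zero => rw [show (⟨0, hk⟩ : Fin (m+1)) = 0 from rfl, hp.1, pathOf_zero]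
  | succ j ih =>
    have hj : j < m := by omega
    have hstep := hp.2.2 ⟨j, hj⟩
    have hsucc : (⟨j, hj⟩ : Fin m).succ = ⟨j+1, hk⟩ := rfl
    have hcast : (⟨j, hj⟩ : Fin m).castSucc = ⟨j, by omega⟩ := rfl
    have ihj := ih (by omega)
    have hps := pathOf_step a (stepOf p) ⟨j, hj⟩
    rw [hsucc, hcast] at hstep hps
    rcases hstep with hstep | hstep
    · have hb : stepOf p ⟨j, hj⟩ = true := by
        simp only [stepOf, hsucc, hcast]
        exact decide_eq_true hstep
      rw [hb, if_pos rfl] at hps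
      rw [hstep, hps, ihj]
    · have hb : stepOf p ⟨j, hj⟩ = false := by
        simp only [stepOf, hsucc, hcast]
        rw [decide_eq_false]
        rw [hstep]
        intro hcon
        have := add_left_cancel hcon
        simp [Prod.ext_iff] at this
      rw [hb, if_neg Bool.false_ne_true] at hps
      rw [hstep, hps, ihj]

/-! ### membership translations -/

lemma isPath_iff (a : ℤ × ℤ) (f : Fin m → Bool) (t : ℤ × ℤ) :
    IsPathZ m a t (pathOf a f) ↔ t = (a.1 + (cnt f m : ℤ), a.2 + (m : ℤ) - (cnt f m : ℤ)) := by
  constructor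
  · intro h
    rw [← h.2.1]
    exact (pathOf_isPath a f).2.1
  · rintro rfl
    exact pathOf_isPath a f

lemma belowDiag_iff (a : ℤ × ℤ) (f : Fin m → Bool) :
    BelowDiag (pathOf a f) ↔ ∀ k ≤ m, 0 ≤ val (a.1 - a.2) f k := by
  constructor
  · intro h k hk
    have h2 := h ⟨k, by omega⟩
    simp only [pathOf, val] at h2 ⊢
    omega
  · intro h i
    have h2 := h i.1 (Nat.lt_succ_iff.mp i.isLt)
    simp only [pathOf, val] at h2 ⊢
    omega

lemma noninter_iff (f g : Fin m → Bool) :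
    NoninterZ (pathOf ((0:ℤ), (0:ℤ)) f) (pathOf ((1:ℤ), (-1:ℤ)) g)
      ↔ ∀ k ≤ m, cnt f k ≤ cnt g k := by
  constructor
  · intro h k hk
    induction k with
    | zero => simp [cnt_zero]
    | succ k ih =>
      have ih' := ih (by omega)
      by_contra hcon
      push_neg at hcon
      have h1 := cnt_succ_le f k
      have h2 := cnt_le_succ g k
      have heq : cnt f (k+1) = cnt g (k+1) + 1 := by omega
      apply h ⟨k+1, by omega⟩ ⟨k+1, by omega⟩
      simp only [pathOf, Prod.ext_iff]
      constructor
      · show (0:ℤ) + (cnt f (k+1) : ℤ) = 1 + (cnt g (k+1) : ℤ)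
        push_cast
        omega
      · show (0:ℤ) + ((k+1 : ℕ) : ℤ) - (cnt f (k+1) : ℤ)
            = -1 + ((k+1 : ℕ) : ℤ) - (cnt g (k+1) : ℤ)
        push_cast
        omega
  · intro h i j hij
    have hsum := congrArg (fun p : ℤ × ℤ => p.1 + p.2) hij
    simp only [pathOf] at hsum
    have hij' : (i : ℕ) = (j : ℕ) := by omega
    have hx := congrArg Prod.fst hij
    simp only [pathOf] at hx
    have hk := h i.1 (Nat.lt_succ_iff.mp i.isLt)
    rw [hij'] at hx hk
    omega

lemma mem_NC_iff {n : ℕ} (f g : Fin (2*n) → Bool) :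
    (f, g) ∈ NC (2*n) ↔
      (IsPathZ (2*n) (0, 0) ((n:ℤ), (n:ℤ)) (pathOf (0, 0) f) ∧
       IsPathZ (2*n) (1, -1) ((n:ℤ) + 1, (n:ℤ) - 1) (pathOf (1, -1) g) ∧
       BelowDiag (pathOf (0, 0) f) ∧ BelowDiag (pathOf (1, -1) g) ∧
       NoninterZ (pathOf (0, 0) f) (pathOf (1, -1) g)) := by
  have ef : ((0:ℤ), (0:ℤ)).1 - ((0:ℤ), (0:ℤ)).2 = 0 := by norm_num
  have eg : ((1:ℤ), (-1:ℤ)).1 - ((1:ℤ), (-1:ℤ)).2 = 2 := by norm_num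
  rw [NC, mem_filter, Finset.mem_product, mem_Ok, mem_Ok]
  constructor
  · rintro ⟨⟨⟨hf1, hf2⟩, hg1, hg2⟩, hdom⟩
    have hfm : cnt f (2*n) = n := by simp only [val] at hf2; omega
    have hgm : cnt g (2*n) = n := by simp only [val] at hg2; omega
    refine ⟨?_, ?_, ?_, ?_, ?_⟩
    · rw [isPath_iff, hfm]
      simp only [Prod.ext_iff]
      constructor <;> (push_cast; ring)
    · rw [isPath_iff, hgm]
      simp only [Prod.ext_iff]
      constructor <;> (push_cast; ring)
    · rw [belowDiag_iff, ef]; exact hf1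
    · rw [belowDiag_iff, eg]; exact hg1
    · rw [noninter_iff]; exact hdom
  · rintro ⟨hp1, hp2, hb1, hb2, hni⟩
    have h1 := (isPath_iff _ f _).mp hp1
    have h2 := (isPath_iff _ g _).mp hp2
    simp only [Prod.ext_iff] at h1 h2
    have hfm : (cnt f (2*n) : ℤ) = n := by
      have := h1.1
      try simp only [] at this
      omega
    have hgm : (cnt g (2*n) : ℤ) = n := by
      have := h2.1
      try simp only [] at this
      omega
    refine ⟨⟨⟨?_, ?_⟩, ?_, ?_⟩, ?_⟩
    · rw [belowDiag_iff, ef] at hb1; exact hb1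
    · simp only [val]; push_cast; omega
    · rw [belowDiag_iff, eg] at hb2; exact hb2
    · simp only [val]; push_cast; omega
    · rw [noninter_iff] at hni; exact hni


noncomputable def equiv_main (n : ℕ) :
    {pr : (Fin (2 * n + 1) → ℤ × ℤ) × (Fin (2 * n + 1) → ℤ × ℤ) //
        IsPathZ (2 * n) (0, 0) (n, n) pr.1 ∧
        IsPathZ (2 * n) (1, -1) ((n : ℤ) + 1, (n : ℤ) - 1) pr.2 ∧
        BelowDiag pr.1 ∧ BelowDiag pr.2 ∧ NoninterZ pr.1 pr.2}
      ≃ {q : (Fin (2*n) → Bool) × (Fin (2*n) → Bool) // q ∈ NC (2*n)} where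
  toFun x := ⟨(stepOf x.1.1, stepOf x.1.2), by
    obtain ⟨⟨p₁, p₂⟩, h1, h2, h3, h4, h5⟩ := x
    have e1 := path_eq h1
    have e2 := path_eq h2
    rw [mem_NC_iff, ← e1, ← e2]
    exact ⟨h1, h2, h3, h4, h5⟩⟩
  invFun q := ⟨(pathOf (0, 0) q.1.1, pathOf (1, -1) q.1.2), by
    have h := (mem_NC_iff q.1.1 q.1.2).mp (by rw [Prod.mk.eta]; exact q.2)
    exact h⟩
  left_inv x := by
    apply Subtype.ext
    apply Prod.ext
    · exact (path_eq x.2.1).symm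
    · exact (path_eq x.2.2.1).symm
  right_inv q := by
    apply Subtype.ext
    apply Prod.ext
    · exact stepOf_pathOf _ _
    · exact stepOf_pathOf _ _

end NDP

open NDP in
theorem noninter_dyck_pairs (n : ℕ) :
    (Nat.card {pr : (Fin (2 * n + 1) → ℤ × ℤ) × (Fin (2 * n + 1) → ℤ × ℤ) //
        IsPathZ (2 * n) (0, 0) (n, n) pr.1 ∧
        IsPathZ (2 * n) (1, -1) ((n : ℤ) + 1, (n : ℤ) - 1) pr.2 ∧
        BelowDiag pr.1 ∧ BelowDiag pr.2 ∧ NoninterZ pr.1 pr.2} : ℤ)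
      = (catalan (n + 2) : ℤ) * (catalan n : ℤ) - (catalan (n + 1) : ℤ) ^ 2 := by
  rw [Nat.card_congr (equiv_main n), Nat.card_eq_finsetCard]
  rcases Nat.eq_zero_or_pos n with rfl | hn
  · have hNC0 : NC (2*0) = Finset.univ := by
      rw [Finset.eq_univ_iff_forall]
      intro q
      simp only [NC, Ok, mem_filter, mem_univ, true_and, Finset.mem_product]
      have hz : ∀ k, k ≤ 2*0 → k = 0 := by omega
      have hv : ∀ (a : ℤ) (s : Fin (2*0) → Bool), NDP.val a s 0 = a := fun a s => val_zero s a
      refine ⟨⟨⟨?_, ?_⟩, ?_, ?_⟩, ?_⟩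
      · intro k hk; rw [hz k hk, hv]
      · show NDP.val 0 q.1 0 = 0; rw [hv]
      · intro k hk; rw [hz k hk, hv]; norm_num
      · show NDP.val 2 q.2 0 = 2; rw [hv]
      · intro k hk; rw [hz k hk, cnt_zero, cnt_zero]
    rw [hNC0]
    rw [Finset.card_univ]
    norm_num [Fintype.card_prod, Fintype.card_fun, Fintype.card_fin,
      catalan_zero, catalan_one, catalan_two]
  · rw [nc_card n hn]
    exact alg n hn
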